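/- arXiv:math/0502423 — 3 statements merged into one kernel-verified Lean document; each statement's English description precedes it below -/
import Mathlib

section
/- Let H be a Hilbert space, k a unit vector in H, and (e_i)_{i∈I} an orthonormal basis of H. For each i let T_i be the rank-one operator T_i h = ⟨h, k⟩ e_i. Then for every a ∈ B(H), the sum over i of T_i a T_i* converges in the weak operator topology to ⟨a k, k⟩ I. -/
open ContinuousLinearMap

/-- Let `k` be a unit vector and `(e i)` an orthonormal basis of `H`, and let
`T i` be the rank-one operator `h ↦ ⟨h, k⟩ e i`.  Then for every `a ∈ B(H)` the sum
`∑ i, T i a (T i)*` converges in the weak operator topology to `⟨a k, k⟩ I`. -/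
theorem rank_one_sum_WOT
    {H : Type*} [NormedAddCommGroup H] [InnerProductSpace ℂ H] [CompleteSpace H]
    {ι : Type*} (e : HilbertBasis ι ℂ H)
    (k : H) (hk : ‖k‖ = 1)
    (T : ι → H →L[ℂ] H)
    (hT : ∀ i (h : H), T i h = (inner ℂ k h : ℂ) • e i) :
    ∀ (a : H →L[ℂ] H) (x y : H),
      HasSum (fun i => (inner ℂ x ((T i ∘L a ∘L ContinuousLinearMap.adjoint (T i)) y) : ℂ))
        ((inner ℂ k (a k) : ℂ) * (inner ℂ x y : ℂ)) := by
  intro a x y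
  have hadj : ∀ i (z : H), ContinuousLinearMap.adjoint (T i) z = (inner ℂ (e i) z : ℂ) • k := by
    intro i z
    apply ext_inner_left ℂ
    intro w
    rw [ContinuousLinearMap.adjoint_inner_right, hT]
    rw [inner_smul_left, inner_smul_right, inner_conj_symm, mul_comm]
  have hterm : ∀ i,
      (inner ℂ x ((T i ∘L a ∘L ContinuousLinearMap.adjoint (T i)) y) : ℂ)
        = (inner ℂ k (a k) : ℂ) * ((inner ℂ x (e i) : ℂ) * (inner ℂ (e i) y : ℂ)) := by
    intro i
    simp only [ContinuousLinearMap.comp_apply, hadj, map_smul, hT, inner_smul_right,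
      smul_smul]
    ring
  simp only [hterm]
  exact (e.hasSum_inner_mul_inner x y).mul_left _
end

section
/- Let H be a Hilbert space, P a projection, S a coisometry with S*S = P, and define Φ(a) = SaS* and Θ(a) = ⟨ak,k⟩I for a unit vector k with S*k = k. For all a, b ∈ B(H) and h ∈ H, in the Hilbert space H_{Φ,Θ} (the Hausdorff completion of B(H) ⊗ B(H) ⊗ H under ⟨a⊗b⊗h, c⊗d⊗g⟩ = ⟨h, Θ(b*Φ(a*c)d)g⟩), one has the identity a ⊗_Φ b ⊗_Θ h = (aS*bS) ⊗_Φ I ⊗_Θ h; equivalently ⟨a⊗b⊗h − aS*bS⊗I⊗h, a⊗b⊗h − aS*bS⊗I⊗h⟩_{Φ,Θ} = 0. -/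
open ContinuousLinearMap

/-- With `Θ(a) = ⟨a k, k⟩ I` and `Φ(a) = S a S*` as in the paper's example, in the
Hilbert space `H_{Φ,Θ}` (Hausdorff completion of `B(H) ⊗ B(H) ⊗ H` under
`⟨a⊗b⊗h, c⊗d⊗g⟩ = ⟨h, Θ(b* Φ(a*c) d) g⟩`) one has
`a ⊗_Φ b ⊗_Θ h = (a S* b S) ⊗_Φ I ⊗_Θ h`, i.e. the difference has zero self-pairing. -/
theorem example_tensor_identity
    {H : Type*} [NormedAddCommGroup H] [InnerProductSpace ℂ H] [CompleteSpace H]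
    (k : H) (hk : ‖k‖ = 1) (P S : H →L[ℂ] H)
    (hco : S * ContinuousLinearMap.adjoint S = 1)
    (hP : ContinuousLinearMap.adjoint S * S = P)
    (hSk : ContinuousLinearMap.adjoint S k = k)
    (Θ Φ : (H →L[ℂ] H) → (H →L[ℂ] H))
    (hΘ : ∀ a, Θ a = (inner ℂ k (a k) : ℂ) • (1 : H →L[ℂ] H))
    (hΦ : ∀ a, Φ a = S * a * ContinuousLinearMap.adjoint S)
    -- the sesquilinear form on `B(H) ⊗ B(H) ⊗ H`
    (F : (H →L[ℂ] H) → (H →L[ℂ] H) → H → (H →L[ℂ] H) → (H →L[ℂ] H) → H → ℂ)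
    (hF : ∀ a b h c d g,
      F a b h c d g = inner ℂ h ((Θ (star b * Φ (star a * c) * d)) g)) :
    ∀ (a b : H →L[ℂ] H) (h : H),
      F a b h a b h
        - F a b h (a * ContinuousLinearMap.adjoint S * b * S) 1 h
        - F (a * ContinuousLinearMap.adjoint S * b * S) 1 h a b h
        + F (a * ContinuousLinearMap.adjoint S * b * S) 1 h
            (a * ContinuousLinearMap.adjoint S * b * S) 1 h = 0 := by
  intro a b h
  have hco' : ∀ x : H →L[ℂ] H, S * (ContinuousLinearMap.adjoint S * x) = x := fun x => by
    rw [← mul_assoc, hco, one_mul]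
  simp only [hF, hΘ, hΦ, star_one, star_mul, one_mul, mul_one, smul_apply, one_apply,
    inner_smul_right, mul_assoc, hco, hco']
  ring
end

section
/- Let M be a von Neumann algebra on H and let α be a normal *-endomorphism of M, W : H → K an isometry into a Hilbert space K, and β a normal *-endomorphism of a von Neumann algebra R on K such that WW* is coinvariant for β (β(WW*)WW* = β(I)WW*), W*RW = M, and Θ(a) = W*β(WaW*)W for a ∈ M. Then Θ^n(a) = W*β^n(WaW*)W for all n ≥ 1 and a ∈ M (powers of an endomorphic dilation dilate powers of the CP map). -/
open ContinuousLinearMap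

/-- If `(K, R, β, W)` is an endomorphic dilation of the CP map `Θ` on `M` (so `WW*` is
coinvariant for `β`, `W*RW = M`, and `Θ(a) = W* β(W a W*) W`), then
`Θⁿ(a) = W* βⁿ(W a W*) W` for all `n ≥ 1` and `a ∈ M`. -/
theorem endomorphic_dilation_powers
    {H K : Type*} [NormedAddCommGroup H] [InnerProductSpace ℂ H] [CompleteSpace H]
    [NormedAddCommGroup K] [InnerProductSpace ℂ K] [CompleteSpace K]
    (M : VonNeumannAlgebra H) (R : VonNeumannAlgebra K)
    (W : H →L[ℂ] K) (hW : ContinuousLinearMap.adjoint W ∘L W = 1)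
    (β : (K →L[ℂ] K) → (K →L[ℂ] K))
    (hβR : ∀ b ∈ R, β b ∈ R)
    (hβadd : ∀ b c, β (b + c) = β b + β c)
    (hβmul : ∀ b ∈ R, ∀ c ∈ R, β (b * c) = β b * β c)
    (hβstar : ∀ b ∈ R, β (star b) = star (β b))
    -- coinvariance of `W W*` under `β`
    (hcoinv : β (W ∘L ContinuousLinearMap.adjoint W) * (W ∘L ContinuousLinearMap.adjoint W)
      = β 1 * (W ∘L ContinuousLinearMap.adjoint W))
    (hWWR : (W ∘L ContinuousLinearMap.adjoint W) ∈ R)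
    -- `W* R W = M`
    (hRM : ∀ b ∈ R, (ContinuousLinearMap.adjoint W ∘L b ∘L W) ∈ M)
    (hMR : ∀ a ∈ M, (W ∘L a ∘L ContinuousLinearMap.adjoint W) ∈ R)
    (Θ : (H →L[ℂ] H) → (H →L[ℂ] H))
    (hΘ : ∀ a ∈ M, Θ a = ContinuousLinearMap.adjoint W ∘L
      β (W ∘L a ∘L ContinuousLinearMap.adjoint W) ∘L W)
    (hΘM : ∀ a ∈ M, Θ a ∈ M) :
    ∀ n : ℕ, 1 ≤ n → ∀ a ∈ M,
      Θ^[n] a = ContinuousLinearMap.adjoint W ∘L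
        β^[n] (W ∘L a ∘L ContinuousLinearMap.adjoint W) ∘L W := by
  set W' := ContinuousLinearMap.adjoint W with hW'
  set P : K →L[ℂ] K := W ∘L W' with hP
  -- basic facts
  have hPW : P ∘L W = W := by
    rw [hP, ContinuousLinearMap.comp_assoc, hW]
    exact W.comp_id
  have hWP : W' ∘L P = W' := by
    rw [hP, ← ContinuousLinearMap.comp_assoc, hW]
    exact W'.id_comp
  have hPstar : star P = P := by
    rw [hP]
    simp only [star_eq_adjoint]
    rw [ContinuousLinearMap.adjoint_comp, ContinuousLinearMap.adjoint_adjoint, ← hW']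
  have h1R : (1 : K →L[ℂ] K) ∈ R := R.one_mem
  have hβ1star : star (β 1) = β 1 := by
    rw [← hβstar 1 h1R, star_one]
  have hβPstar : star (β P) = β P := by
    rw [← hβstar P hWWR, hPstar]
  -- β P ∘L W = β 1 ∘L W
  have hβPW : β P ∘L W = β 1 ∘L W := by
    have := congrArg (fun x => x ∘L W) hcoinv
    simpa only [ContinuousLinearMap.mul_def, ContinuousLinearMap.comp_assoc, hPW] using this
  -- W' ∘L β P = W' ∘L β 1
  have hWβP : W' ∘L β P = W' ∘L β 1 := by
    have hc2 : P * β P = P * β 1 := by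
      have := congrArg star hcoinv
      simpa only [star_mul, hPstar, hβPstar, hβ1star] using this
    have := congrArg (fun x => W' ∘L x) hc2
    simpa only [ContinuousLinearMap.mul_def, ← ContinuousLinearMap.comp_assoc, hWP] using this
  -- compression lemma
  have hcompress : ∀ c ∈ R, W' ∘L β (P * c * P) ∘L W = W' ∘L β c ∘L W := by
    intro c hc
    have h1 : β (P * c * P) = β P * β c * β P := by
      rw [hβmul (P * c) (R.mul_mem hWWR hc) P hWWR, hβmul P hWWR c hc]
    have h2 : β c = β 1 * β c * β 1 := by
      rw [← hβmul 1 h1R c hc, ← hβmul (1 * c) (R.mul_mem h1R hc) 1 h1R, one_mul, mul_one]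
    rw [h1]
    conv_rhs => rw [h2]
    simp only [ContinuousLinearMap.mul_def, ContinuousLinearMap.comp_assoc]
    rw [hβPW, ← ContinuousLinearMap.comp_assoc W' (β P), hWβP,
      ContinuousLinearMap.comp_assoc]
  -- membership of iterates
  have hΘn : ∀ n a, a ∈ M → Θ^[n] a ∈ M := by
    intro n
    induction n with
    | zero => intro a ha; simpa using ha
    | succ n ih =>
      intro a ha
      rw [Function.iterate_succ_apply']
      exact hΘM _ (ih a ha)
  have hβn : ∀ n b, b ∈ R → β^[n] b ∈ R := by
    intro n
    induction n with
    | zero => intro b hb; simpa using hb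
    | succ n ih =>
      intro b hb
      rw [Function.iterate_succ_apply']
      exact hβR _ (ih b hb)
  intro n hn a ha
  induction n with
  | zero => omega
  | succ n ih =>
    rcases Nat.eq_or_lt_of_le hn with h1 | h1
    · -- n + 1 = 1
      have : n = 0 := by omega
      subst this
      simpa using hΘ a ha
    · have hn' : 1 ≤ n := by omega
      rw [Function.iterate_succ_apply', Function.iterate_succ_apply',
        hΘ _ (hΘn n a ha), ih hn']
      have hb : β^[n] (W ∘L a ∘L W') ∈ R := hβn n _ (hMR a ha)
      have key : W ∘L (W' ∘L β^[n] (W ∘L a ∘L W') ∘L W) ∘L W'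
          = P * β^[n] (W ∘L a ∘L W') * P := by
        simp only [ContinuousLinearMap.mul_def, hP, ContinuousLinearMap.comp_assoc]
      rw [key, hcompress _ hb]
end
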